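/- Let K be a field of characteristic zero and U a unipotent algebraic group acting rationally on an irreducible affine variety V over K. Then the field of U-invariant rational functions K(V)^U is the field of fractions of the algebra of U-invariant regular functions K[V]^U. -/

import Mathlib

open Module LinearMap in

open Polynomial Finset in
lemma aux_vandermonde {L : Type*} [Field L] {s : Finset L} {d : L → L}
    (hd : ∀ μ ∈ s, d μ ≠ 0) (h : ∀ k : ℕ, k ≠ 0 → ∑ μ ∈ s, d μ * μ ^ k = 0) :
    ∀ μ ∈ s, μ = 0 := by
  classical
  by_contra hc
  push_neg at hc
  obtain ⟨μ₀, hμ₀s, hμ₀⟩ := hc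
  set q : Polynomial L := X * ∏ ν ∈ s.erase μ₀, (X - C ν) with hq
  have hq0 : q.coeff 0 = 0 := by
    rw [coeff_zero_eq_eval_zero]; simp [hq]
  have hkey : ∑ μ ∈ s, d μ * q.eval μ = 0 := by
    have heval : ∀ μ : L, q.eval μ = ∑ k ∈ Finset.range (q.natDegree + 1), q.coeff k * μ ^ k :=
      fun μ ↦ eval_eq_sum_range (p := q) μ
    calc ∑ μ ∈ s, d μ * q.eval μ
        = ∑ k ∈ Finset.range (q.natDegree + 1), q.coeff k * ∑ μ ∈ s, d μ * μ ^ k := by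
          simp_rw [heval, Finset.mul_sum, Finset.sum_comm (s := s)]
          exact Finset.sum_congr rfl fun k _ ↦ Finset.sum_congr rfl fun μ _ ↦ by ring
      _ = 0 := by
          refine Finset.sum_eq_zero fun k _ ↦ ?_
          rcases Nat.eq_zero_or_pos k with rfl | hk
          · simp [hq0]
          · rw [h k hk.ne', mul_zero]
  have hsingle : ∑ μ ∈ s, d μ * q.eval μ = d μ₀ * q.eval μ₀ := by
    refine Finset.sum_eq_single_of_mem μ₀ hμ₀s fun ν hν hne ↦ ?_
    have : q.eval ν = 0 := by
      simp only [hq, eval_mul, eval_prod, eval_sub, eval_X, eval_C]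
      refine mul_eq_zero_of_right _ (Finset.prod_eq_zero (Finset.mem_erase.2 ⟨hne, hν⟩) ?_)
      simp
    rw [this, mul_zero]
  have hqμ₀ : q.eval μ₀ ≠ 0 := by
    simp only [hq, eval_mul, eval_prod, eval_sub, eval_X, eval_C]
    refine mul_ne_zero hμ₀ (Finset.prod_ne_zero_iff.2 fun ν hν ↦ ?_)
    exact sub_ne_zero.2 (Ne.symm (Finset.mem_erase.1 hν).1)
  rw [hsingle] at hkey
  exact (mul_ne_zero (hd μ₀ hμ₀s) hqμ₀) hkey

open Module LinearMap

lemma aux_coe_pow_restrict {R M : Type*} [CommRing R] [AddCommGroup M] [Module R M]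
    {p : Submodule R M} (f : Module.End R M) (hf : Set.MapsTo f p p) (k : ℕ) (x : p) :
    (((f.restrict hf) ^ k) x : M) = (f ^ k) (x : M) := by
  induction k with
  | zero => simp
  | succ n ih =>
    simp only [pow_succ', Module.End.mul_apply, coe_restrict_apply, Submodule.coe_mk]
    exact congrArg f ih

lemma aux_nilpotent_of_trace_pow {L V : Type*} [Field L] [CharZero L] [IsAlgClosed L]
    [AddCommGroup V] [Module L V] [FiniteDimensional L V] (f : Module.End L V)
    (h : ∀ k : ℕ, k ≠ 0 → trace L V (f ^ k) = 0) : IsNilpotent f := by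
  classical
  have hf : ⨆ μ, f.maxGenEigenspace μ = ⊤ := Module.End.iSup_maxGenEigenspace_eq_top f
  have hind := f.independent_maxGenEigenspace
  have hds := DirectSum.isInternal_submodule_of_iSupIndep_of_iSup_eq_top hind hf
  have h_fin : {μ | f.maxGenEigenspace μ ≠ ⊥}.Finite :=
    WellFoundedGT.finite_ne_bot_of_iSupIndep hind
  have hmap1 : ∀ μ, Set.MapsTo f (f.maxGenEigenspace μ) (f.maxGenEigenspace μ) :=
    fun μ ↦ f.mapsTo_maxGenEigenspace_of_comm rfl μ
  have hmap : ∀ (k : ℕ) (μ : L),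
      Set.MapsTo (f ^ k) (f.maxGenEigenspace μ) (f.maxGenEigenspace μ) :=
    fun k μ ↦ f.mapsTo_maxGenEigenspace_of_comm (Commute.pow_right rfl k) μ
  have htr : ∀ (k : ℕ) (μ : L), trace L _ ((f ^ k).restrict (hmap k μ)) =
      μ ^ k * (finrank L (f.maxGenEigenspace μ) : L) := by
    intro k μ
    set W := f.maxGenEigenspace μ
    set g : Module.End L W := f.restrict (hmap1 μ) with hg
    have hrp : (f ^ k).restrict (hmap k μ) = g ^ k := by
      ext x
      show (f ^ k) (x : V) = _
      exact (aux_coe_pow_restrict f (hmap1 μ) k x).symm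
    set c : Module.End L W := algebraMap L _ μ with hc
    set n : Module.End L W := g - c with hn
    have hnil : IsNilpotent n := f.isNilpotent_restrict_maxGenEigenspace_sub_algebraMap μ
    have hcomm : Commute c n := Algebra.commute_algebraMap_left μ n
    have hgcn : g = c + n := by rw [hn]; abel
    rw [hrp, hgcn, hcomm.add_pow, map_sum, Finset.sum_eq_single k]
    · have h1 : c ^ k * n ^ (k - k) * (k.choose k : Module.End L W) = algebraMap L _ (μ ^ k) := by
        simp [hc, ← map_pow]
      rw [h1, Algebra.algebraMap_eq_smul_one, map_smul, trace_one, smul_eq_mul]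
    · intro i hi hik
      have hj : k - i ≠ 0 := by rw [Finset.mem_range] at hi; omega
      have h2 : c ^ i * n ^ (k - i) * (k.choose i : Module.End L W)
          = (μ ^ i * (k.choose i : L)) • n ^ (k - i) := by
        rw [hc, ← map_pow, ← map_natCast (algebraMap L (Module.End L W)) (k.choose i),
          mul_assoc, (Algebra.commute_algebraMap_right _ _).eq, ← mul_assoc, ← map_mul,
          Algebra.smul_def]
      rw [h2, map_smul]
      have h3 : trace L W (n ^ (k - i)) = 0 :=
        (isNilpotent_trace_of_isNilpotent (hnil.pow_of_pos hj)).eq_zero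
      rw [h3, smul_zero]
    · intro hk; exact absurd (Finset.self_mem_range_succ k) hk
  have hsum : ∀ k : ℕ, k ≠ 0 →
      ∑ μ ∈ h_fin.toFinset, (finrank L (f.maxGenEigenspace μ) : L) * μ ^ k = 0 := by
    intro k hk
    calc ∑ μ ∈ h_fin.toFinset, (finrank L (f.maxGenEigenspace μ) : L) * μ ^ k
        = ∑ μ ∈ h_fin.toFinset, trace L _ ((f ^ k).restrict (hmap k μ)) := by
          refine Finset.sum_congr rfl fun μ _ ↦ ?_
          rw [htr k μ, mul_comm]
      _ = trace L V (f ^ k) := (trace_eq_sum_trace_restrict' hds h_fin (hmap k)).symm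
      _ = 0 := h k hk
  have hzero : ∀ μ ∈ h_fin.toFinset, μ = 0 := by
    refine aux_vandermonde (fun μ hμ ↦ ?_) hsum
    have hμ' : f.maxGenEigenspace μ ≠ ⊥ := h_fin.mem_toFinset.1 hμ
    have : Nontrivial ↥(f.maxGenEigenspace μ) :=
      Submodule.nontrivial_iff_ne_bot.2 hμ'
    exact Nat.cast_ne_zero.2 finrank_pos.ne'
  have htop : f.maxGenEigenspace 0 = ⊤ := by
    refine le_antisymm le_top ?_
    rw [← hf]
    refine iSup_le fun μ ↦ ?_
    by_cases hμ : f.maxGenEigenspace μ = ⊥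
    · rw [hμ]; exact bot_le
    · rw [hzero μ (h_fin.mem_toFinset.2 hμ)]
  rw [Module.End.isNilpotent_iff_of_finite]
  intro m
  have hm : m ∈ f.maxGenEigenspace 0 := htop ▸ Submodule.mem_top
  rw [Module.End.mem_maxGenEigenspace] at hm
  obtain ⟨k, hk⟩ := hm
  exact ⟨k, by simpa using hk⟩


lemma aux_nilpotent_of_trace_pow' {K V : Type*} [Field K] [CharZero K]
    [AddCommGroup V] [Module K V] [FiniteDimensional K V] (f : Module.End K V)
    (h : ∀ k : ℕ, k ≠ 0 → trace K V (f ^ k) = 0) : IsNilpotent f := by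
  classical
  set n := finrank K V
  let b := Module.finBasis K V
  set M : Matrix (Fin n) (Fin n) K := LinearMap.toMatrixAlgEquiv b f with hM
  let L := AlgebraicClosure K
  have : CharZero L := charZero_of_injective_algebraMap (algebraMap K L).injective
  set M' : Matrix (Fin n) (Fin n) L := (algebraMap K L).mapMatrix M with hM'
  set f' : Module.End L (Fin n → L) := Matrix.toLinAlgEquiv' M' with hf'
  have htr : ∀ k : ℕ, k ≠ 0 → trace L (Fin n → L) (f' ^ k) = 0 := by
    intro k hk
    have h1 : f' ^ k = Matrix.toLinAlgEquiv' (M' ^ k) := by rw [hf', map_pow]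
    rw [h1]
    have h2 : trace L (Fin n → L) (Matrix.toLinAlgEquiv' (M' ^ k)) = (M' ^ k).trace := by
      rw [trace_eq_matrix_trace L (Pi.basisFun L (Fin n))]
      congr 1
      rw [LinearMap.toMatrix_eq_toMatrix']
      exact LinearMap.toMatrix'_toLin' (M' ^ k)
    rw [h2, hM', ← map_pow]
    have h5 : ((algebraMap K L).mapMatrix (M ^ k)).trace = algebraMap K L ((M ^ k).trace) := by
      simp [Matrix.trace, Matrix.diag]
    have h3 : M ^ k = LinearMap.toMatrixAlgEquiv b (f ^ k) := by rw [hM, map_pow]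
    have h4 : (M ^ k).trace = trace K V (f ^ k) := by
      have : LinearMap.toMatrixAlgEquiv b (f ^ k) = LinearMap.toMatrix b b (f ^ k) := rfl
      rw [h3, this, ← trace_eq_matrix_trace K b (f ^ k)]
    rw [h5, h4, h k hk, map_zero]
  have hnil' : IsNilpotent f' := aux_nilpotent_of_trace_pow f' htr
  have hnilM' : IsNilpotent M' := by
    have := hnil'.map (Matrix.toLinAlgEquiv' (R := L) (n := Fin n)).symm
    simpa [hf'] using this
  have hnilM : IsNilpotent M := by
    obtain ⟨m, hm⟩ := hnilM'
    refine ⟨m, ?_⟩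
    have : (algebraMap K L).mapMatrix (M ^ m) = 0 := by rw [map_pow]; exact hm
    ext i j
    have := congrArg (fun N => N i j) this
    simpa using (algebraMap K L).injective (by simpa using this)
  obtain ⟨m, hm⟩ := hnilM
  refine ⟨m, ?_⟩
  have : LinearMap.toMatrixAlgEquiv b (f ^ m) = 0 := by rw [map_pow]; exact hm
  simpa using congrArg (LinearMap.toMatrixAlgEquiv b).symm this |>.trans (map_zero _)

section
attribute [local instance] LieRing.ofAssociativeRing

open Module LinearMap in
lemma aux_kolchin {K V : Type*} [Field K] [CharZero K]
    [AddCommGroup V] [Module K V] [FiniteDimensional K V] [Nontrivial V]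
    {G : Type*} [Group G] (ρ : G →* Module.End K V)
    (hunip : ∀ g : G, IsNilpotent (ρ g - 1)) :
    ∃ v : V, v ≠ 0 ∧ ∀ g : G, ρ g v = v := by
  classical
  set T : Set (Module.End K V) := Set.range (fun g => ρ g - 1) with hT
  set S : Submodule K (Module.End K V) := Submodule.span K T with hS
  have htr1 : ∀ g : G, trace K V (ρ g) = (finrank K V : K) := by
    intro g
    have h0 : ρ g = 1 + (ρ g - 1) := by abel
    rw [h0, map_add, trace_one,
      (isNilpotent_trace_of_isNilpotent (hunip g)).eq_zero, add_zero]
  have htrS : ∀ s ∈ S, trace K V s = 0 := by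
    intro s hs
    induction hs using Submodule.span_induction with
    | mem x hx => obtain ⟨g, rfl⟩ := hx; simp only [map_sub, htr1, trace_one, sub_self]
    | zero => simp
    | add x y _ _ hx hy => rw [map_add, hx, hy, add_zero]
    | smul c x _ hx => rw [map_smul, hx, smul_zero]
  have hmulT : ∀ x ∈ T, ∀ y ∈ T, x * y ∈ S := by
    rintro x ⟨g, rfl⟩ y ⟨h, rfl⟩
    have h1 : (ρ g - 1) * (ρ h - 1) = (ρ (g*h) - 1) - (ρ g - 1) - (ρ h - 1) := by
      rw [map_mul]; noncomm_ring
    rw [h1]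
    exact sub_mem (sub_mem (Submodule.subset_span ⟨g*h, rfl⟩)
      (Submodule.subset_span ⟨g, rfl⟩)) (Submodule.subset_span ⟨h, rfl⟩)
  have hSS : S * S ≤ S := by
    rw [hS, Submodule.span_mul_span]
    refine Submodule.span_le.2 ?_
    rintro z hz
    rw [Set.mem_mul] at hz
    obtain ⟨x, hx, y, hy, rfl⟩ := hz
    exact hmulT x hx y hy
  have hmulS : ∀ x ∈ S, ∀ y ∈ S, x * y ∈ S :=
    fun x hx y hy => hSS (Submodule.mul_mem_mul hx hy)
  have hnilS : ∀ s ∈ S, IsNilpotent s := by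
    intro s hs
    refine aux_nilpotent_of_trace_pow' s (fun k hk => ?_)
    have hpow : ∀ k : ℕ, k ≠ 0 → s ^ k ∈ S := by
      intro k
      induction k with
      | zero => intro h; exact absurd rfl h
      | succ m ih =>
        intro _
        rcases Nat.eq_zero_or_pos m with rfl | hm
        · simpa using hs
        · rw [pow_succ]
          exact hmulS _ (ih hm.ne') _ hs
    exact htrS _ (hpow k hk)
  set LS : LieSubalgebra K (Module.End K V) :=
    { S with
      lie_mem' := fun {x y} hx hy => by
        change x * y - y * x ∈ S
        exact sub_mem (hmulS _ hx _ hy) (hmulS _ hy _ hx) } with hLS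
  have hmemLS : ∀ z : Module.End K V, z ∈ LS ↔ z ∈ S := fun z => Iff.rfl
  have hnoeth : IsNoetherian K LS := inferInstance
  have heng : ∀ x : LS, IsNilpotent (LieModule.toEnd K LS V x) := by
    intro x
    have h1 : LieModule.toEnd K LS V x = LieModule.toEnd K (Module.End K V) V (x : Module.End K V) :=
      LieSubalgebra.toEnd_eq (R := K) (L := Module.End K V) (M := V) LS
    have h2 : LieModule.toEnd K (Module.End K V) V (x : Module.End K V) = (x : Module.End K V) := by
      rw [LieModule.toEnd_module_end]; rfl
    rw [h1, h2]
    exact hnilS _ ((hmemLS _).1 x.2)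
  have hnilmod : LieModule.IsNilpotent LS V :=
    LieAlgebra.isEngelian_of_isNoetherian V heng
  have hnontriv : Nontrivial (LieModule.maxTrivSubmodule K LS V) :=
    LieModule.nontrivial_max_triv_of_isNilpotent K LS V
  obtain ⟨⟨v, hv⟩, hvne⟩ := exists_ne (0 : LieModule.maxTrivSubmodule K LS V)
  rw [LieModule.mem_maxTrivSubmodule] at hv
  refine ⟨v, ?_, ?_⟩
  · intro h0
    exact hvne (Subtype.ext (by simp [h0]))
  · intro g
    have hmem : (ρ g - 1 : Module.End K V) ∈ LS :=
      (hmemLS _).2 (Submodule.subset_span ⟨g, rfl⟩)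
    have := hv ⟨ρ g - 1, hmem⟩
    have h3 : (ρ g - 1) v = 0 := this
    have h4 : ρ g v - v = 0 := by simpa [LinearMap.sub_apply] using h3
    exact sub_eq_zero.1 h4

end

/-- Rosenlicht / Vinberg–Popov: for a locally finite, unipotent action of a
group U by K-algebra automorphisms on the coordinate ring A of an irreducible affine
variety (A a finitely generated K-domain), char K = 0, every U-invariant element of the
fraction field K(V) = Frac(A) is a quotient of two U-invariant elements of A. -/
theorem stmt15 {K : Type*} [Field K] [CharZero K]
    {A : Type*} [CommRing A] [IsDomain A] [Algebra K A] [Algebra.FiniteType K A]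
    {U : Type*} [Group U]
    [Algebra K (FractionRing A)] [IsScalarTower K A (FractionRing A)]
    (μ : U →* (A ≃ₐ[K] A))
    -- the action is rational: locally finite
    (hlf : ∀ a : A, ∃ W : Submodule K A, FiniteDimensional K ↥W ∧ a ∈ W ∧
      ∀ g : U, ∀ w ∈ W, μ g w ∈ W)
    -- the group acts unipotently: each g acts as a locally unipotent operator
    (hunip : ∀ g : U, ∀ a : A, ∃ m : ℕ,
      ((((μ g).toLinearMap - LinearMap.id : Module.End K A) ^ m) a = 0))
    -- the induced action on the field of rational functions
    (φ : U →* (FractionRing A ≃ₐ[K] FractionRing A))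
    (hcomp : ∀ g : U, ∀ a : A,
      φ g (algebraMap A (FractionRing A) a) = algebraMap A (FractionRing A) (μ g a)) :
    ∀ x : FractionRing A, (∀ g : U, φ g x = x) →
      ∃ a b : A, (∀ g : U, μ g a = a) ∧ (∀ g : U, μ g b = b) ∧ b ≠ 0 ∧
        x = algebraMap A (FractionRing A) a / algebraMap A (FractionRing A) b := by
  
  classical
  intro x hx
  let D : Submodule K A :=
    { carrier := {b : A |
        ∃ a : A, algebraMap A (FractionRing A) b * x = algebraMap A (FractionRing A) a}
      add_mem' := by
        rintro p q ⟨a1, h1⟩ ⟨a2, h2⟩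
        exact ⟨a1 + a2, by rw [map_add, add_mul, h1, h2, ← map_add]⟩
      zero_mem' := ⟨0, by simp⟩
      smul_mem' := by
        rintro c b ⟨a1, h1⟩
        refine ⟨c • a1, ?_⟩
        rw [Algebra.smul_def, Algebra.smul_def, map_mul, map_mul, mul_assoc, h1] }
  have hDmem : ∀ b : A, b ∈ D ↔
      ∃ a : A, algebraMap A (FractionRing A) b * x = algebraMap A (FractionRing A) a :=
    fun b => Iff.rfl
  -- D is stable
  have hDstab : ∀ g : U, ∀ b ∈ D, μ g b ∈ D := by
    intro g b hb
    obtain ⟨a, ha⟩ := (hDmem b).1 hb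
    refine (hDmem _).2 ⟨μ g a, ?_⟩
    calc algebraMap A (FractionRing A) (μ g b) * x
        = φ g (algebraMap A (FractionRing A) b) * φ g x := by rw [hcomp, hx]
      _ = φ g (algebraMap A (FractionRing A) b * x) := (map_mul _ _ _).symm
      _ = φ g (algebraMap A (FractionRing A) a) := by rw [ha]
      _ = algebraMap A (FractionRing A) (μ g a) := hcomp g a
  -- a nonzero element of D
  obtain ⟨⟨a₀, s⟩, hs⟩ := IsLocalization.surj (nonZeroDivisors A) x
  have hsD : (s : A) ∈ D := (hDmem _).2 ⟨a₀, by rw [mul_comm]; exact hs⟩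
  have hs0 : (s : A) ≠ 0 := nonZeroDivisors.ne_zero s.2
  -- the finite-dimensional stable subspace
  obtain ⟨W, hWfin, hsW, hWstab⟩ := hlf (s : A)
  set W' : Submodule K A := W ⊓ D with hW'
  have : FiniteDimensional K ↥W := hWfin
  have hW'fin : FiniteDimensional K ↥W' := Submodule.finiteDimensional_of_le inf_le_left
  have hsW' : (s : A) ∈ W' := Submodule.mem_inf.2 ⟨hsW, hsD⟩
  have hW'nt : Nontrivial ↥W' := nontrivial_of_ne ⟨(s : A), hsW'⟩ 0 (by
    intro h
    exact hs0 (by simpa using congrArg Subtype.val h))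
  have hW'stab : ∀ g : U, ∀ w ∈ W', (μ g) w ∈ W' := by
    intro g w hw
    exact Submodule.mem_inf.2 ⟨hWstab g w (Submodule.mem_inf.1 hw).1,
      hDstab g w (Submodule.mem_inf.1 hw).2⟩
  -- the restricted representation
  let ρ : U →* Module.End K ↥W' :=
    { toFun := fun g => ((μ g).toLinearMap).restrict
        (p := W') (q := W') (fun w hw => hW'stab g w hw)
      map_one' := by
        ext w
        simp [LinearMap.restrict_apply, map_one μ]
      map_mul' := by
        intro g h
        ext w
        simp [LinearMap.coe_restrict_apply, map_mul μ]; rfl }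
    -- unipotence
  have hunipW' : ∀ g : U, IsNilpotent (ρ g - 1) := by
    intro g
    rw [Module.End.isNilpotent_iff_of_finite]
    intro w
    set e : Module.End K A := (μ g).toLinearMap - LinearMap.id with he
    have hemap : Set.MapsTo e W' W' := by
      intro z hz
      exact Submodule.sub_mem _ (hW'stab g z hz) hz
    have hre : ρ g - 1 = e.restrict hemap := by
      ext z
      simp [LinearMap.coe_restrict_apply, e, ρ]; rfl
    obtain ⟨m, hm⟩ := hunip g (w : A)
    refine ⟨m, ?_⟩
    apply Subtype.ext
    rw [hre, aux_coe_pow_restrict e hemap m w]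
    simpa using hm
  -- Kolchin
  obtain ⟨v, hv0, hvfix⟩ := aux_kolchin ρ hunipW'
  set b : A := (v : A) with hb
  have hbD : b ∈ D := (Submodule.mem_inf.1 v.2).2
  obtain ⟨a, hab⟩ := (hDmem b).1 hbD
  have hb0 : b ≠ 0 := fun h => hv0 (Subtype.ext (show (v : A) = ((0 : ↥W') : A) from h))
  have hbfix : ∀ g : U, μ g b = b := by
    intro g
    have h1 : ((ρ g v : ↥W') : A) = μ g b := rfl
    have h2 := congrArg Subtype.val (hvfix g)
    rw [h1] at h2
    exact h2
  have hinj : Function.Injective (algebraMap A (FractionRing A)) := IsFractionRing.injective A (FractionRing A)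
  have hafix : ∀ g : U, μ g a = a := by
    intro g
    apply hinj
    calc algebraMap A (FractionRing A) (μ g a)
        = φ g (algebraMap A (FractionRing A) a) := (hcomp g a).symm
      _ = φ g (algebraMap A (FractionRing A) b * x) := by rw [hab]
      _ = φ g (algebraMap A (FractionRing A) b) * φ g x := map_mul _ _ _
      _ = algebraMap A (FractionRing A) (μ g b) * x := by rw [hcomp, hx]
      _ = algebraMap A (FractionRing A) b * x := by rw [hbfix]
      _ = algebraMap A (FractionRing A) a := hab
  refine ⟨a, b, hafix, hbfix, hb0, ?_⟩
  have hbF : algebraMap A (FractionRing A) b ≠ 0 := fun h => hb0 (hinj (by rw [h, map_zero]))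
  rw [eq_div_iff hbF, mul_comm]
  exact hab
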